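/- Let φ>0 and r∈(0,1). For every z₁>0, the Kibble bivariate gamma density integrates in its second argument to a gamma density: ∫₀^∞ g_{φ,r}(z₁,z₂) dz₂ = φ^φ · z₁^{φ−1} · exp(−φz₁) / Γ(φ). In particular, each marginal of the Kibble bivariate gamma distribution is the gamma distribution with rate φ and shape φ (mean 1 and variance 1/φ). -/

import Mathlib

open MeasureTheory Real Set

/-- Modified Bessel function of the first kind (series form). -/
noncomputable def besselI (α x : ℝ) : ℝ :=
  ∑' k : ℕ, (x / 2) ^ (2 * (k : ℝ) + α) / (Real.Gamma ((k : ℝ) + α + 1) * (Nat.factorial k : ℝ))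

/-- Gamma density with rate `γ` and shape `α`. -/
noncomputable def gammaPdf (γ α z : ℝ) : ℝ :=
  γ ^ α * z ^ (α - 1) * Real.exp (-γ * z) / Real.Gamma α

/-- Kibble bivariate gamma density with parameters `φ > 0` and `r ∈ (0,1)`. -/
noncomputable def kibble (φ r z₁ z₂ : ℝ) : ℝ :=
  φ ^ (φ + 1) / ((1 - r) * Real.Gamma φ) * (z₁ * z₂ / r) ^ ((φ - 1) / 2) *
    Real.exp (-φ * (z₁ + z₂) / (1 - r)) *
    besselI (φ - 1) (2 * φ * Real.sqrt (r * z₁ * z₂) / (1 - r))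

/-- Conditional normal density of the NSVt model given latent `z`: `N(μ, σ²/z)`. -/
noncomputable def normCond (σ μ y z : ℝ) : ℝ :=
  Real.sqrt z / (Real.sqrt (2 * Real.pi) * σ) * Real.exp (-z * (y - μ) ^ 2 / (2 * σ ^ 2))

/-- Student-t density with `ν` degrees of freedom, location `μ` and scale `σ`. -/
noncomputable def studentTPdf (ν μ σ y : ℝ) : ℝ :=
  Real.Gamma ((ν + 1) / 2) / (Real.Gamma (ν / 2) * Real.sqrt (Real.pi * ν) * σ) *
    (1 + (y - μ) ^ 2 / (ν * σ ^ 2)) ^ (-(ν + 1) / 2)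

/-- Gauss hypergeometric series `₂F₁(a₁,a₂;b;x)`. -/
noncomputable def hyp2F1 (a₁ a₂ b x : ℝ) : ℝ :=
  ∑' k : ℕ, Real.Gamma ((k : ℝ) + a₁) * Real.Gamma ((k : ℝ) + a₂) * Real.Gamma b /
    (Real.Gamma a₁ * Real.Gamma a₂ * Real.Gamma ((k : ℝ) + b)) * x ^ k / (Nat.factorial k : ℝ)

/-- Confluent hypergeometric (Kummer) series `₁F₁(a;b;x)`. -/
noncomputable def hyp1F1 (a b x : ℝ) : ℝ :=
  ∑' k : ℕ, Real.Gamma ((k : ℝ) + a) * Real.Gamma b /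
    (Real.Gamma a * Real.Gamma ((k : ℝ) + b)) * x ^ k / (Nat.factorial k : ℝ)

/-- Generalized Laguerre polynomial of degree `n` with parameter `α`. -/
noncomputable def laguerreL (n : ℕ) (α x : ℝ) : ℝ :=
  ∑ i ∈ Finset.range (n + 1),
    (-1 : ℝ) ^ i * Real.Gamma ((n : ℝ) + α + 1) /
      (Real.Gamma (α + (i : ℝ) + 1) * (Nat.factorial (n - i) : ℝ) * (Nat.factorial i : ℝ)) * x ^ i

/-- Negative binomial pmf with parameters `φ > 0` and `r ∈ (0,1)`. -/
noncomputable def nbinomPmf (φ r : ℝ) (u : ℕ) : ℝ :=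
  Real.Gamma (φ + u) / (Real.Gamma φ * (Nat.factorial u : ℝ)) * (1 - r) ^ φ * r ^ u

/-- The quantity `ω(y₁,y₂)` appearing in the pairwise joint density of the NSVt model. -/
noncomputable def omegaFn (ν σ r μ₁ μ₂ y₁ y₂ : ℝ) : ℝ :=
  ((1 + (1 - r) * (y₁ - μ₁) ^ 2 / (ν * σ ^ 2)) *
    (1 + (1 - r) * (y₂ - μ₂) ^ 2 / (ν * σ ^ 2)))⁻¹

/-- Pairwise joint density of the NSVt model (with `r = ρʲ`). -/
noncomputable def pairDensity (ν σ r μ₁ μ₂ y₁ y₂ : ℝ) : ℝ :=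
  (1 - r) ^ (ν / 2 + 1) / (Real.pi * ν * σ ^ 2) *
    (Real.Gamma ((ν + 1) / 2) / Real.Gamma (ν / 2)) ^ 2 *
    omegaFn ν σ r μ₁ μ₂ y₁ y₂ ^ ((ν + 1) / 2) *
    hyp2F1 ((ν + 1) / 2) ((ν + 1) / 2) (ν / 2) (r * omegaFn ν σ r μ₁ μ₂ y₁ y₂)

lemma aux_integrableOn {a c : ℝ} (ha : 0 < a) (hc : 0 < c) :
    IntegrableOn (fun t : ℝ => t ^ (a - 1) * Real.exp (-(c * t))) (Set.Ioi 0) := by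
  have h0 : IntegrableOn (fun x : ℝ => Real.exp (-x) * x ^ (a - 1)) (Set.Ioi 0) :=
    Real.GammaIntegral_convergent ha
  have h1 : IntegrableOn (fun x : ℝ => Real.exp (-(c * x)) * (c * x) ^ (a - 1))
      (Set.Ioi 0) := by
    have := (integrableOn_Ioi_comp_mul_left_iff
      (fun x : ℝ => Real.exp (-x) * x ^ (a - 1)) 0 hc).2 (by simpa using h0)
    simpa using this
  have h2 : IntegrableOn (fun x : ℝ => c ^ (a - 1) * (x ^ (a - 1) * Real.exp (-(c * x))))
      (Set.Ioi 0) := by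
    refine h1.congr_fun (fun x hx => ?_) measurableSet_Ioi
    dsimp only
    rw [Real.mul_rpow hc.le (le_of_lt hx)]
    ring
  have hcne : c ^ (a - 1) ≠ 0 := (Real.rpow_pos_of_pos hc _).ne'
  exact (integrable_const_mul_iff (isUnit_iff_ne_zero.mpr hcne)
    (fun x : ℝ => x ^ (a - 1) * Real.exp (-(c * x)))).mp h2

/-- each marginal of the Kibble bivariate gamma is Gamma(rate φ, shape φ). -/
theorem kibble_marginal (φ r : ℝ) (hφ : 0 < φ) (hr : r ∈ Set.Ioo (0 : ℝ) 1) :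
    ∀ z₁ : ℝ, 0 < z₁ →
      (∫ z₂ in Set.Ioi (0 : ℝ), kibble φ r z₁ z₂) =
        φ ^ φ * z₁ ^ (φ - 1) * Real.exp (-φ * z₁) / Real.Gamma φ := by
  obtain ⟨hr0, hr1⟩ := hr
  intro z₁ hz₁
  have hu0 : (0:ℝ) < 1 - r := by linarith
  set u : ℝ := 1 - r with hu
  have hΓφ : 0 < Real.Gamma φ := Real.Gamma_pos_of_pos hφ
  have hcu : 0 < φ / u := div_pos hφ hu0
  -- the series expansion of the integrand
  set F : ℕ → ℝ → ℝ := fun k z₂ =>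
    (φ ^ (φ + 1) / (u * Real.Gamma φ) * Real.exp (-(φ / u * z₁)) *
        (r ^ k * z₁ ^ ((k : ℝ) + φ - 1) * (φ / u) ^ (2 * (k : ℝ) + φ - 1)) /
        (Real.Gamma ((k : ℝ) + φ) * (Nat.factorial k : ℝ))) *
      (z₂ ^ ((k : ℝ) + φ - 1) * Real.exp (-(φ / u * z₂))) with hF
  have hA : ∀ z₂ ∈ Set.Ioi (0:ℝ), kibble φ r z₁ z₂ = ∑' k, F k z₂ := by
    intro z₂ hz₂
    rw [Set.mem_Ioi] at hz₂
    simp only [kibble, besselI]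
    rw [← hu, ← tsum_mul_left]
    refine tsum_congr fun k => ?_
    have hΓk : 0 < Real.Gamma ((k:ℝ) + φ) := Real.Gamma_pos_of_pos (by positivity)
    have hfk : (0:ℝ) < (Nat.factorial k : ℝ) := by positivity
    have e2 : (k : ℝ) + (φ - 1) + 1 = (k : ℝ) + φ := by ring
    have hx : 2 * φ * Real.sqrt (r * z₁ * z₂) / u / 2 = φ * Real.sqrt (r * z₁ * z₂) / u := by
      ring
    rw [e2, hx, hF]
    have hs : (0:ℝ) < r * z₁ * z₂ := by positivity
    have hsq : 0 < Real.sqrt (r * z₁ * z₂) := Real.sqrt_pos.mpr hs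
    have hb1 : (0:ℝ) < z₁ * z₂ / r := by positivity
    have hb2 : (0:ℝ) < φ * Real.sqrt (r * z₁ * z₂) / u := by positivity
    have hL : (0:ℝ) < φ ^ (φ + 1) / (u * Real.Gamma φ) * (z₁ * z₂ / r) ^ ((φ - 1) / 2) *
        Real.exp (-φ * (z₁ + z₂) / u) *
        ((φ * Real.sqrt (r * z₁ * z₂) / u) ^ (2 * (k:ℝ) + (φ - 1)) /
          (Real.Gamma ((k:ℝ) + φ) * (Nat.factorial k : ℝ))) := by positivity
    have hR : (0:ℝ) < (φ ^ (φ + 1) / (u * Real.Gamma φ) * Real.exp (-(φ / u * z₁)) *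
        (r ^ k * z₁ ^ ((k : ℝ) + φ - 1) * (φ / u) ^ (2 * (k : ℝ) + φ - 1)) /
        (Real.Gamma ((k : ℝ) + φ) * (Nat.factorial k : ℝ))) *
      (z₂ ^ ((k : ℝ) + φ - 1) * Real.exp (-(φ / u * z₂))) := by positivity
    refine Real.log_injOn_pos (Set.mem_Ioi.mpr hL) (Set.mem_Ioi.mpr hR) ?_
    simp only [Real.log_mul, Real.log_div, Real.log_exp, Real.log_rpow, Real.log_pow,
      Real.log_sqrt, ne_eq, mul_ne_zero_iff, div_ne_zero_iff, Real.exp_ne_zero,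
      hφ, hz₁, hz₂, hr0, hu0, hcu, hb1, hb2, hs.le, hsq, hΓk, hΓφ, hfk,
      hφ.ne', hz₁.ne', hz₂.ne', hr0.ne', hu0.ne', hΓφ.ne', hΓk.ne', hfk.ne', hsq.ne',
      not_false_iff, and_true, true_and, and_self,
      (Real.rpow_pos_of_pos hφ (φ+1)).ne', (Real.rpow_pos_of_pos hb1 ((φ-1)/2)).ne',
      (Real.rpow_pos_of_pos hb2 (2*(k:ℝ)+(φ-1))).ne',
      (Real.rpow_pos_of_pos hz₁ ((k:ℝ)+φ-1)).ne',
      (Real.rpow_pos_of_pos hcu (2*(k:ℝ)+φ-1)).ne',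
      (Real.rpow_pos_of_pos hz₂ ((k:ℝ)+φ-1)).ne', (pow_pos hr0 k).ne']
    ring
  rw [setIntegral_congr_fun measurableSet_Ioi hA]
  set D : ℝ := φ ^ φ * z₁ ^ (φ - 1) * Real.exp (-(φ / u * z₁)) / Real.Gamma φ with hD
  set x : ℝ := r * φ * z₁ / u with hxdef
  have hxpos : 0 < x := by rw [hxdef]; positivity
  have hInt : ∀ k : ℕ, IntegrableOn (F k) (Set.Ioi 0) := by
    intro k
    have ha : (0:ℝ) < (k:ℝ) + φ := by positivity
    exact (aux_integrableOn ha hcu).const_mul _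
  have hval : ∀ k : ℕ, (∫ z₂ in Set.Ioi 0, F k z₂) = D * x ^ k / (Nat.factorial k : ℝ) := by
    intro k
    have ha : (0:ℝ) < (k:ℝ) + φ := by positivity
    have hΓk : 0 < Real.Gamma ((k:ℝ) + φ) := Real.Gamma_pos_of_pos ha
    have hfk : (0:ℝ) < (Nat.factorial k : ℝ) := by positivity
    have hbinv : (0:ℝ) < 1 / (φ / u) := by positivity
    simp only [hF]
    rw [integral_const_mul, integral_rpow_mul_exp_neg_mul_Ioi ha hcu]
    have hL : (0:ℝ) < φ ^ (φ + 1) / (u * Real.Gamma φ) * Real.exp (-(φ / u * z₁)) *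
        (r ^ k * z₁ ^ ((k : ℝ) + φ - 1) * (φ / u) ^ (2 * (k : ℝ) + φ - 1)) /
        (Real.Gamma ((k : ℝ) + φ) * (Nat.factorial k : ℝ)) *
        ((1 / (φ / u)) ^ ((k:ℝ) + φ) * Real.Gamma ((k:ℝ) + φ)) := by positivity
    have hR : (0:ℝ) < D * x ^ k / (Nat.factorial k : ℝ) := by
      rw [hD]; positivity
    refine Real.log_injOn_pos (Set.mem_Ioi.mpr hL) (Set.mem_Ioi.mpr hR) ?_
    rw [hD, hxdef]
    simp only [Real.log_mul, Real.log_div, Real.log_exp, Real.log_rpow, Real.log_pow,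
      ne_eq, mul_ne_zero_iff, div_ne_zero_iff, Real.exp_ne_zero,
      hφ, hz₁, hr0, hu0, hcu, hbinv, hxpos, hΓk, hΓφ, hfk,
      hφ.ne', hz₁.ne', hr0.ne', hu0.ne', hΓφ.ne', hΓk.ne', hfk.ne',
      not_false_iff, and_true, true_and, and_self, one_ne_zero, Real.log_one,
      (Real.rpow_pos_of_pos hφ (φ+1)).ne', (Real.rpow_pos_of_pos hφ φ).ne',
      (Real.rpow_pos_of_pos hz₁ ((k:ℝ)+φ-1)).ne', (Real.rpow_pos_of_pos hz₁ (φ-1)).ne',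
      (Real.rpow_pos_of_pos hcu (2*(k:ℝ)+φ-1)).ne',
      (Real.rpow_pos_of_pos hbinv ((k:ℝ)+φ)).ne', (pow_pos hr0 k).ne',
      (pow_pos hxpos k).ne', (div_pos (mul_pos (mul_pos hr0 hφ) hz₁) hu0).ne',
      (pow_pos (div_pos (mul_pos (mul_pos hr0 hφ) hz₁) hu0) k).ne']
    ring
  have hnorm : ∀ k : ℕ, (∫ z₂ in Set.Ioi 0, ‖F k z₂‖) = ∫ z₂ in Set.Ioi 0, F k z₂ := by
    intro k
    refine setIntegral_congr_fun measurableSet_Ioi fun z₂ hz₂ => ?_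
    have hz₂' : 0 < z₂ := hz₂
    refine Real.norm_of_nonneg ?_
    have ha : (0:ℝ) < (k:ℝ) + φ := by positivity
    have hΓk : 0 < Real.Gamma ((k:ℝ) + φ) := Real.Gamma_pos_of_pos ha
    simp only [hF]
    positivity
  have hSum : Summable (fun k : ℕ => ∫ z₂ in Set.Ioi 0, ‖F k z₂‖) := by
    simp only [hnorm, hval, mul_div_assoc]
    exact (Real.summable_pow_div_factorial x).mul_left D
  rw [← MeasureTheory.integral_tsum_of_summable_integral_norm hInt hSum]
  rw [tsum_congr hval]
  simp only [mul_div_assoc]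
  rw [tsum_mul_left]
  have hexp : ∑' n : ℕ, x ^ n / (Nat.factorial n : ℝ) = Real.exp x := by
    rw [Real.exp_eq_exp_ℝ, NormedSpace.exp_eq_tsum_div]
  rw [hexp, hD]
  have hexp2 : Real.exp (-(φ / u * z₁)) * Real.exp x = Real.exp (-φ * z₁) := by
    rw [← Real.exp_add, hxdef, hu]
    congr 1
    field_simp
    ring
  calc φ ^ φ * z₁ ^ (φ - 1) * Real.exp (-(φ / u * z₁)) / Real.Gamma φ * Real.exp x
      = φ ^ φ * z₁ ^ (φ - 1) * (Real.exp (-(φ / u * z₁)) * Real.exp x) / Real.Gamma φ := by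
        ring
    _ = _ := by rw [hexp2]; ring
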